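/- Let V be a real vector space, m a natural number, and f: V → ℝ a polynomial of degree ≤ m, i.e., D_{v₁}⋯D_{v_{m+1}} f = 0 identically for all v₁,…,v_{m+1} ∈ V and the restriction of f to every finite-dimensional subspace of V is continuous. Let v₁,…,v_n ∈ V be linearly independent. Then D^α f(0) = 0 whenever α₁ + ⋯ + α_n > m, and for all real numbers λ₁,…,λ_n, f(λ₁v₁ + ⋯ + λ_n v_n) = Σ_{α ∈ ℤ_{≥0}^n} D^α f(0) · C(λ₁, α₁) ⋯ C(λ_n, α_n), where D^α = D_{v₁}^{α₁} ⋯ D_{v_n}^{α_n} and C(λ, a) = λ(λ−1)⋯(λ−a+1)/a! is the generalized binomial coefficient (the sum is finite since only multi-indices α with α₁+⋯+α_n ≤ m contribute). -/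

import Mathlib

/-- The forward difference operator: `(D_v f)(x) = f(x + v) − f(x)`. -/
def fwdDiffOp {V : Type*} [AddCommGroup V] (v : V) (f : V → ℝ) : V → ℝ :=
  fun x => f (x + v) - f x

/-- The iterated difference operator `D^α = D_{v₁}^{α₁} ⋯ D_{v_n}^{α_n}` with respect to a
family `v : Fin n → V` (the operators `D_{v i}` commute, so the order is immaterial). -/
def iterFwdDiff {V : Type*} [AddCommGroup V] {n : ℕ} (v : Fin n → V) (α : Fin n → ℕ)
    (f : V → ℝ) : V → ℝ :=
  (List.finRange n).foldr (fun i g => (fwdDiffOp (v i))^[α i] g) f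

/-- The generalized binomial coefficient `C(x, a) = x(x−1)⋯(x−a+1)/a!`. -/
noncomputable def genBinom (x : ℝ) (a : ℕ) : ℝ :=
  (∏ j ∈ Finset.range a, (x - j)) / (Nat.factorial a)

section basics
variable {V : Type*} [AddCommGroup V]

lemma fwdDiffOp_eq_fwdDiff (v : V) : fwdDiffOp v = fwdDiff v := rfl

lemma fwdDiffOp_apply (v : V) (f : V → ℝ) (x : V) :
    fwdDiffOp v f x = f (x + v) - f x := rfl

lemma fwdDiffOp_comm (u w : V) (f : V → ℝ) :
    fwdDiffOp u (fwdDiffOp w f) = fwdDiffOp w (fwdDiffOp u f) := by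
  funext x
  simp only [fwdDiffOp_apply]
  rw [add_right_comm]
  ring

lemma fwdDiffOp_iter_comm (u w : V) (k : ℕ) (f : V → ℝ) :
    fwdDiffOp u ((fwdDiffOp w)^[k] f) = (fwdDiffOp w)^[k] (fwdDiffOp u f) := by
  induction k generalizing f with
  | zero => rfl
  | succ k ih =>
      rw [Function.iterate_succ_apply, Function.iterate_succ_apply, ih, fwdDiffOp_comm]

lemma fwdDiffOp_iter_iter_comm (u w : V) (p q : ℕ) (f : V → ℝ) :
    (fwdDiffOp u)^[p] ((fwdDiffOp w)^[q] f) = (fwdDiffOp w)^[q] ((fwdDiffOp u)^[p] f) := by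
  induction p generalizing f with
  | zero => rfl
  | succ p ih =>
      rw [Function.iterate_succ_apply, Function.iterate_succ_apply,
        fwdDiffOp_iter_comm, ih]

lemma fwdDiffOp_zero_fn (v : V) {g : V → ℝ} (hg : ∀ x, g x = 0) :
    ∀ x, fwdDiffOp v g x = 0 := by
  intro x; simp [fwdDiffOp_apply, hg]

lemma fwdDiffOp_iter_zero_fn (v : V) (k : ℕ) {g : V → ℝ} (hg : ∀ x, g x = 0) :
    ∀ x, (fwdDiffOp v)^[k] g x = 0 := by
  induction k generalizing g with
  | zero => exact hg
  | succ k ih => intro x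
                 rw [Function.iterate_succ_apply]
                 exact ih (fwdDiffOp_zero_fn v hg) x

lemma foldr_fwdDiffOp_zero_fn {g : V → ℝ} (hg : ∀ x, g x = 0) (L : List V) :
    ∀ x, (L.foldr fwdDiffOp g) x = 0 := by
  induction L with
  | nil => exact hg
  | cons a L ih => exact fwdDiffOp_zero_fn a ih

lemma iter_eq_foldr_replicate (v : V) (k : ℕ) (f : V → ℝ) :
    (fwdDiffOp v)^[k] f = (List.replicate k v).foldr fwdDiffOp f := by
  induction k generalizing f with
  | zero => rfl
  | succ k ih =>
      rw [Function.iterate_succ_apply', List.replicate_succ, List.foldr_cons, ih]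

lemma foldr_fwdDiffOp_iter_comm (L : List V) (w : V) (k : ℕ) (f : V → ℝ) :
    L.foldr fwdDiffOp ((fwdDiffOp w)^[k] f) = (fwdDiffOp w)^[k] (L.foldr fwdDiffOp f) := by
  induction L with
  | nil => rfl
  | cons a L ih => simp only [List.foldr_cons, ih, fwdDiffOp_iter_comm]

end basics

section vanish
variable {V : Type*} [AddCommGroup V] {m : ℕ} {f : V → ℝ}

/-- list form of the degree hypothesis -/
lemma hdiff_list (hdiff : ∀ v : Fin (m + 1) → V, ∀ x : V, ((List.ofFn v).foldr fwdDiffOp f) x = 0)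
    (L : List V) (hL : L.length = m + 1) : ∀ x, (L.foldr fwdDiffOp f) x = 0 := by
  intro x
  have h1 : List.ofFn (fun i : Fin (m+1) => L.get (Fin.cast hL.symm i)) = L := by
    apply List.ext_getElem
    · simp [hL]
    · intro i h1 h2
      rw [List.getElem_ofFn]
      rfl
  have := hdiff (fun i : Fin (m+1) => L.get (Fin.cast hL.symm i)) x
  rwa [h1] at this

lemma foldr_vanish_of_length
    (hdiff : ∀ v : Fin (m + 1) → V, ∀ x : V, ((List.ofFn v).foldr fwdDiffOp f) x = 0)
    (L : List V) (hL : m + 1 ≤ L.length) : ∀ x, (L.foldr fwdDiffOp f) x = 0 := by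
  intro x
  have hsplit : L = L.take (L.length - (m+1)) ++ L.drop (L.length - (m+1)) :=
    (List.take_append_drop _ L).symm
  have hlen : (L.drop (L.length - (m+1))).length = m + 1 := by
    rw [List.length_drop]
    omega
  rw [hsplit, List.foldr_append]
  exact foldr_fwdDiffOp_zero_fn (hdiff_list hdiff _ hlen) _ x

/-- iterFwdDiff as a foldr over a flattened list -/
lemma foldr_iter_eq_flatten {n : ℕ} (v : Fin n → V) (α : Fin n → ℕ) (f : V → ℝ)
    (l : List (Fin n)) :
    l.foldr (fun i g => (fwdDiffOp (v i))^[α i] g) f =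
      (l.map (fun i => List.replicate (α i) (v i))).flatten.foldr fwdDiffOp f := by
  induction l generalizing f with
  | nil => rfl
  | cons a l ih =>
      simp only [List.map_cons, List.flatten_cons, List.foldr_append, List.foldr_cons]
      rw [ih, iter_eq_foldr_replicate]

lemma iterFwdDiff_eq_foldr {n : ℕ} (v : Fin n → V) (α : Fin n → ℕ) (f : V → ℝ) :
    iterFwdDiff v α f =
      ((List.finRange n).map (fun i => List.replicate (α i) (v i))).flatten.foldr fwdDiffOp f :=
  foldr_iter_eq_flatten v α f _

lemma length_flatten_replicate {n : ℕ} (v : Fin n → V) (α : Fin n → ℕ) :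
    ((List.finRange n).map (fun i => List.replicate (α i) (v i))).flatten.length = ∑ i, α i := by
  rw [List.length_flatten]
  simp only [List.map_map]
  rw [Fin.sum_univ_def]
  congr 1
  simp [Function.comp_def]

/-- Part 1 of the theorem. -/
lemma iterFwdDiff_vanish {n : ℕ}
    (hdiff : ∀ v : Fin (m + 1) → V, ∀ x : V, ((List.ofFn v).foldr fwdDiffOp f) x = 0)
    (v : Fin n → V) (α : Fin n → ℕ) (hα : m < ∑ i, α i) (x : V) :
    iterFwdDiff v α f x = 0 := by
  rw [iterFwdDiff_eq_foldr]
  apply foldr_vanish_of_length hdiff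
  rw [length_flatten_replicate]
  omega
end vanish

section newton
open Finset

lemma genBinom_eq_prod_div (x : ℝ) (a : ℕ) :
    genBinom x a = (∏ j ∈ Finset.range a, (x - j)) / (Nat.factorial a) := rfl

lemma prod_range_cast_sub (N j : ℕ) :
    (∏ i ∈ Finset.range j, ((N : ℝ) - i)) = (N.descFactorial j : ℝ) := by
  rcases le_or_gt j N with h | h
  · induction j with
    | zero => simp
    | succ j ih =>
        rw [Finset.prod_range_succ, ih (by omega), Nat.descFactorial_succ, Nat.cast_mul,
          Nat.cast_sub (by omega)]
        ring
  · rw [Finset.prod_eq_zero (Finset.mem_range.2 h) (by simp),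
      Nat.descFactorial_eq_zero_iff_lt.2 h, Nat.cast_zero]

lemma genBinom_natCast (N j : ℕ) : genBinom (N : ℝ) j = (N.choose j : ℝ) := by
  rw [genBinom_eq_prod_div, prod_range_cast_sub, Nat.descFactorial_eq_factorial_mul_choose,
    Nat.cast_mul, mul_comm, mul_div_assoc, div_self (by positivity), mul_one]

/-- Truncated Gregory-Newton formula given vanishing of the `(m+1)`-st difference. -/
lemma newton_trunc {m : ℕ} (h : ℝ → ℝ) (s : ℝ)
    (hvan : ∀ x, (fwdDiffOp s)^[m+1] h x = 0) (N : ℕ) (x : ℝ) :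
    h (x + N • s) = ∑ j ∈ Finset.range (m+1), (N.choose j : ℝ) * (fwdDiffOp s)^[j] h x := by
  have newton := shift_eq_sum_fwdDiff_iter s h N x
  rw [fwdDiffOp_eq_fwdDiff]
  rcases le_or_gt N m with hNm | hNm
  · rw [newton]
    rw [Finset.sum_subset (Finset.range_subset_range.2 (show N+1 ≤ m+1 by omega))]
    · apply Finset.sum_congr rfl
      intro j _
      rw [nsmul_eq_mul]
    · intro j _ hj
      rw [Finset.mem_range, not_lt] at hj
      rw [Nat.choose_eq_zero_of_lt (by omega), zero_smul]
  · rw [newton, ← Finset.sum_subset (Finset.range_subset_range.2 (show m+1 ≤ N+1 by omega))]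
    · apply Finset.sum_congr rfl
      intro j _
      rw [nsmul_eq_mul]
    · intro j _ hj
      rw [Finset.mem_range, not_lt] at hj
      have : j = (j - (m+1)) + (m+1) := by omega
      rw [this, Function.iterate_add_apply, ← fwdDiffOp_eq_fwdDiff,
        fwdDiffOp_iter_zero_fn s _ hvan x, smul_zero]
end newton

section frechet
open Finset Polynomial

/-- Newton-form polynomial with an affine change of variable. -/
noncomputable def newtonQ (m : ℕ) (d : ℕ → ℝ) (b e : ℝ) : Polynomial ℝ :=
  ∑ j ∈ Finset.range (m+1), Polynomial.C (d j / (Nat.factorial j)) *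
    ∏ i ∈ Finset.range j, (Polynomial.C b * Polynomial.X + Polynomial.C (e - i))

lemma newtonQ_eval (m : ℕ) (d : ℕ → ℝ) (b e t : ℝ) :
    (newtonQ m d b e).eval t = ∑ j ∈ Finset.range (m+1), d j * genBinom (b*t+e) j := by
  rw [newtonQ, Polynomial.eval_finset_sum]
  apply Finset.sum_congr rfl
  intro j _
  rw [Polynomial.eval_mul, Polynomial.eval_C, Polynomial.eval_prod, genBinom]
  rw [show ∏ i ∈ range j, Polynomial.eval t (Polynomial.C b * Polynomial.X
        + Polynomial.C (e - (i:ℝ))) = ∏ i ∈ range j, ((b*t+e) - i) from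
    Finset.prod_congr rfl (by intro i _; simp; ring)]
  ring

lemma newtonQ_natDegree_le (m : ℕ) (d : ℕ → ℝ) (b e : ℝ) :
    (newtonQ m d b e).natDegree ≤ m := by
  apply Polynomial.natDegree_sum_le_of_forall_le
  intro j hj
  refine (Polynomial.natDegree_C_mul_le _ _).trans ?_
  refine (Polynomial.natDegree_prod_le _ _).trans ?_
  calc ∑ i ∈ range j, (Polynomial.C b * Polynomial.X + Polynomial.C (e - (i:ℝ))).natDegree
      ≤ ∑ _i ∈ range j, 1 := by
        apply Finset.sum_le_sum
        intro i _
        refine (Polynomial.natDegree_add_le _ _).trans ?_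
        simp only [Polynomial.natDegree_C, max_le_iff, Nat.le_zero]
        constructor
        · exact (Polynomial.natDegree_C_mul_le _ _).trans (by simp)
        · exact le_refl _ |>.trans (by omega)
    _ ≤ m := by
        rw [Finset.sum_const, Finset.card_range, smul_eq_mul, mul_one]
        exact Nat.lt_succ_iff.1 (Finset.mem_range.1 hj)

lemma frechet1 (m : ℕ) (h : ℝ → ℝ) (hc : Continuous h)
    (hd : ∀ s x : ℝ, (fwdDiffOp s)^[m+1] h x = 0) (t : ℝ) :
    h t = ∑ k ∈ Finset.range (m+1), genBinom t k * (fwdDiffOp (1:ℝ))^[k] h 0 := by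
  set P : Polynomial ℝ := newtonQ m (fun j => (fwdDiffOp (1:ℝ))^[j] h 0) 1 0 with hP
  -- step A : agreement at naturals
  have stepA : ∀ N : ℕ, h (N:ℝ) = P.eval (N:ℝ) := by
    intro N
    have := newton_trunc h 1 (fun x => hd 1 x) N 0
    rw [zero_add, nsmul_eq_mul, mul_one] at this
    rw [this, hP, newtonQ_eval]
    apply Finset.sum_congr rfl
    intro j _
    rw [one_mul, add_zero, genBinom_natCast, mul_comm]
  -- step B : agreement at -M + N/b
  have key : ∀ (M b : ℕ), 0 < b → ∀ N : ℕ,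
      h (-(M:ℝ) + N * (1/b)) = P.eval (-(M:ℝ) + N * (1/b)) := by
    intro M b hb N
    have hbR : (b:ℝ) ≠ 0 := Nat.cast_ne_zero.2 hb.ne'
    set Q : Polynomial ℝ := newtonQ m
      (fun j => (fwdDiffOp (1/(b:ℝ)))^[j] h (-(M:ℝ))) b ((b:ℝ)*M) with hQ
    have hQh : ∀ N : ℕ, h (-(M:ℝ) + N * (1/b)) = Q.eval (-(M:ℝ) + N * (1/b)) := by
      intro N
      have := newton_trunc h (1/(b:ℝ)) (fun x => hd _ x) N (-(M:ℝ))
      rw [nsmul_eq_mul] at this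
      rw [this, hQ, newtonQ_eval]
      have harg : (b:ℝ) * (-(M:ℝ) + N * (1/b)) + (b:ℝ)*M = (N:ℝ) := by
        field_simp
        ring
      rw [harg]
      apply Finset.sum_congr rfl
      intro j _
      rw [genBinom_natCast, mul_comm]
    have hPQ : Q = P := by
      have hsub : P - Q = 0 := by
        apply Polynomial.eq_zero_of_natDegree_lt_card_of_eval_eq_zero (P - Q)
          (f := fun i : Fin (m+1) => ((i : ℕ) : ℝ))
        · exact fun i j hij => Fin.val_injective (Nat.cast_injective hij)
        · intro i
          have harg : -(M:ℝ) + ((b*(M+(i:ℕ)) : ℕ) : ℝ) * (1/b) = ((i:ℕ):ℝ) := by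
            push_cast
            field_simp
            ring
          have h1 := hQh (b*(M+(i:ℕ)))
          rw [harg] at h1
          rw [Polynomial.eval_sub, ← h1, ← stepA (i:ℕ), sub_self]
        · rw [Fintype.card_fin]
          have := Polynomial.natDegree_sub_le P Q
          have h1 := newtonQ_natDegree_le m (fun j => (fwdDiffOp (1:ℝ))^[j] h 0) 1 0
          have h2 := newtonQ_natDegree_le m
            (fun j => (fwdDiffOp (1/(b:ℝ)))^[j] h (-(M:ℝ))) b ((b:ℝ)*M)
          rw [← hP] at h1; rw [← hQ] at h2
          omega
      have := sub_eq_zero.1 hsub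
      exact this.symm
    rw [hQh N, hPQ]
  -- rational points
  have hrat : ∀ q : ℚ, h (q:ℝ) = P.eval (q:ℝ) := by
    intro q
    set M : ℕ := q.num.natAbs with hM
    set N : ℕ := (q.num + q.den * M).toNat with hN
    have hnonneg : (0:ℤ) ≤ q.num + q.den * M := by
      have hden : (1:ℤ) ≤ q.den := by exact_mod_cast q.pos
      rcases le_or_gt 0 q.num with hq | hq
      · positivity
      · have : (M:ℤ) = -q.num := by
          rw [hM]; omega
        nlinarith
    have harg : -(M:ℝ) + (N:ℝ) * (1/(q.den:ℝ)) = (q:ℝ) := by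
      have hNZ : ((N:ℤ)) = q.num + q.den * M := by
        rw [hN]; exact Int.toNat_of_nonneg hnonneg
      have hNN : (N:ℝ) = ((q.num : ℝ) + (q.den:ℝ) * M) := by
        exact_mod_cast congrArg (fun z : ℤ => (z:ℝ)) hNZ
      have hden : (q.den:ℝ) ≠ 0 := Nat.cast_ne_zero.2 q.den_nz
      rw [hNN, Rat.cast_def]
      field_simp
      ring
    have := key M q.den q.pos N
    rw [harg] at this
    exact this
  -- density
  have heq : h = fun x => P.eval x := by
    apply Continuous.ext_on (Rat.denseRange_cast (𝕜 := ℝ)) hc P.continuous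
    rintro _ ⟨q, rfl⟩
    exact hrat q
  rw [congrFun heq t, hP, newtonQ_eval]
  apply Finset.sum_congr rfl
  intro j _
  rw [one_mul, add_zero, mul_comm]
end frechet

section comp
variable {W V : Type*} [AddCommGroup W] [AddCommGroup V]

lemma fwdDiffOp_comp (e : W → V) (u : W) (w : V)
    (he : ∀ x, e (x + u) = e x + w) (F : V → ℝ) :
    fwdDiffOp u (F ∘ e) = (fwdDiffOp w F) ∘ e := by
  funext x
  simp [fwdDiffOp_apply, he, Function.comp]

lemma fwdDiffOp_iter_comp (e : W → V) (u : W) (w : V)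
    (he : ∀ x, e (x + u) = e x + w) (F : V → ℝ) (k : ℕ) :
    (fwdDiffOp u)^[k] (F ∘ e) = ((fwdDiffOp w)^[k] F) ∘ e := by
  induction k generalizing F with
  | zero => rfl
  | succ k ih =>
      rw [Function.iterate_succ_apply, Function.iterate_succ_apply,
        fwdDiffOp_comp e u w he, ih]

lemma foldr_comp (e : W → V) (ψ : W → V) (he : ∀ u x, e (x + u) = e x + ψ u)
    (L : List W) (F : V → ℝ) :
    L.foldr fwdDiffOp (F ∘ e) = ((L.map ψ).foldr fwdDiffOp F) ∘ e := by
  induction L generalizing F with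
  | nil => rfl
  | cons a L ih =>
      simp only [List.foldr_cons, List.map_cons, ih,
        fwdDiffOp_comp e a (ψ a) (fun x => he a x)]

lemma foldr_iter_comp {ι : Type*} (e : W → V) (l : List ι) (a : ι → ℕ)
    (uw : ι → W) (w' : ι → V) (he : ∀ i x, e (x + uw i) = e x + w' i) (F : V → ℝ) :
    l.foldr (fun i g => (fwdDiffOp (uw i))^[a i] g) (F ∘ e) =
      (l.foldr (fun i g => (fwdDiffOp (w' i))^[a i] g) F) ∘ e := by
  induction l generalizing F with
  | nil => rfl
  | cons i l ih =>
      simp only [List.foldr_cons, ih, fwdDiffOp_iter_comp e (uw i) (w' i) (fun x => he i x)]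

lemma foldr_iterops_iter_comm {ι : Type*} (l : List ι) (w : ι → V) (a : ι → ℕ)
    (u : V) (k : ℕ) (f : V → ℝ) :
    l.foldr (fun i g => (fwdDiffOp (w i))^[a i] g) ((fwdDiffOp u)^[k] f) =
      (fwdDiffOp u)^[k] (l.foldr (fun i g => (fwdDiffOp (w i))^[a i] g) f) := by
  induction l generalizing f with
  | nil => rfl
  | cons i l ih => simp only [List.foldr_cons, ih, fwdDiffOp_iter_iter_comm]

end comp

section cont
variable {W : Type*} [AddCommGroup W] [TopologicalSpace W] [IsTopologicalAddGroup W]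

lemma continuous_fwdDiffOp (u : W) {G : W → ℝ} (hc : Continuous G) :
    Continuous (fwdDiffOp u G) := by
  have : fwdDiffOp u G = fun x => G (x + u) - G x := rfl
  rw [this]
  exact (hc.comp (continuous_id.add continuous_const)).sub hc

lemma continuous_fwdDiffOp_iter (u : W) (k : ℕ) {G : W → ℝ} (hc : Continuous G) :
    Continuous ((fwdDiffOp u)^[k] G) := by
  induction k generalizing G with
  | zero => exact hc
  | succ k ih => rw [Function.iterate_succ_apply]; exact ih (continuous_fwdDiffOp u hc)

end cont

lemma sum_piFinset_succ {n m : ℕ} (F : (Fin (n+1) → ℕ) → ℝ) :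
    ∑ α ∈ Fintype.piFinset (fun _ : Fin (n+1) => Finset.range (m+1)), F α
    = ∑ k ∈ Finset.range (m+1),
        ∑ β ∈ Fintype.piFinset (fun _ : Fin n => Finset.range (m+1)), F (Fin.cons k β) := by
  rw [← Finset.sum_product']
  apply Finset.sum_nbij' (i := fun α => ((α 0 : ℕ), Fin.tail α))
    (j := fun p : ℕ × (Fin n → ℕ) => Fin.cons p.1 p.2)
  · intro α hα
    rw [Fintype.mem_piFinset] at hα
    refine Finset.mem_product.2 ⟨hα 0, ?_⟩
    rw [Fintype.mem_piFinset]
    exact fun i => hα i.succ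
  · intro p hp
    rw [Finset.mem_product] at hp
    rw [Fintype.mem_piFinset]
    intro i
    refine Fin.cases ?_ ?_ i
    · simpa using hp.1
    · intro j
      simpa using (Fintype.mem_piFinset.1 hp.2) j
  · intro α _
    exact Fin.cons_self_tail α
  · intro p _
    simp
  · intro α _
    rw [Fin.cons_self_tail]

set_option maxHeartbeats 1000000 in
lemma mainR (m : ℕ) : ∀ (n : ℕ) (G : (Fin n → ℝ) → ℝ), Continuous G →
    (∀ L : List (Fin n → ℝ), L.length = m + 1 → ∀ x, (L.foldr fwdDiffOp G) x = 0) →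
    ∀ lam : Fin n → ℝ,
      G lam = ∑ α ∈ Fintype.piFinset (fun _ : Fin n => Finset.range (m+1)),
        iterFwdDiff (fun i => Pi.single i 1) α G 0 * ∏ i, genBinom (lam i) (α i) := by
  intro n
  induction n with
  | zero =>
      intro G _ _ lam
      have huniv : (Fintype.piFinset (fun _ : Fin 0 => Finset.range (m+1)))
          = Finset.univ := by
        apply Finset.eq_univ_of_forall
        intro x
        rw [Fintype.mem_piFinset]
        exact fun i => i.elim0
      rw [huniv, Finset.univ_unique, Finset.sum_singleton]
      have h2 : lam = 0 := Subsingleton.elim _ _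
      rw [h2]
      simp [iterFwdDiff, List.finRange_zero]
  | succ n ih =>
      intro G hc hd lam
      set E : Fin (n+1) → (Fin (n+1) → ℝ) := fun i => Pi.single i 1 with hE
      have hcons_add : ∀ (t s : ℝ) (μ u : Fin n → ℝ),
          Fin.cons (t+s) (μ+u) = (Fin.cons t μ : Fin (n+1) → ℝ) + Fin.cons s u := by
        intro t s μ u
        funext j
        refine Fin.cases ?_ ?_ j <;> simp
      have hE0 : (Fin.cons (1:ℝ) (0 : Fin n → ℝ)) = E 0 := by
        funext j
        refine Fin.cases ?_ ?_ j
        · simp [hE]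
        · intro i
          simp [hE, Pi.single_apply, (Fin.succ_ne_zero i).symm]
      have hEs : ∀ i : Fin n, (Fin.cons (0:ℝ) (Pi.single i 1)) = E i.succ := by
        intro i
        funext j
        refine Fin.cases ?_ ?_ j
        · simp [hE, Pi.single_apply, (Fin.succ_ne_zero i)]
        · intro j'
          simp [hE, Pi.single_apply, Fin.succ_inj]
      have hzero : (Fin.cons (0:ℝ) (0 : Fin n → ℝ)) = (0 : Fin (n+1) → ℝ) := by
        funext j
        refine Fin.cases rfl (fun i => rfl) j
      -- the sliced function and its Newton expansion in the first variable
      have hconsc : ∀ μ : Fin n → ℝ, Continuous (fun t : ℝ => (Fin.cons t μ : Fin (n+1) → ℝ)) := by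
        intro μ
        apply continuous_pi
        intro j
        refine Fin.cases ?_ ?_ j
        · simp; exact continuous_id'
        · intro i
          simpa using continuous_const
      have hslice : ∀ (μ : Fin n → ℝ) (t : ℝ),
          G (Fin.cons t μ) = ∑ k ∈ Finset.range (m+1),
            genBinom t k * ((fwdDiffOp (E 0))^[k] G) (Fin.cons (0:ℝ) μ) := by
        intro μ t
        have hcomp : ∀ (s : ℝ) (k : ℕ), (fwdDiffOp s)^[k] (G ∘ fun t : ℝ => Fin.cons t μ) =
            ((fwdDiffOp (Fin.cons s (0 : Fin n → ℝ)))^[k] G) ∘ (fun t : ℝ => Fin.cons t μ) := by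
          intro s k
          apply fwdDiffOp_iter_comp
          intro x
          rw [← hcons_add, add_zero]
        have hdiff1 : ∀ s x : ℝ, (fwdDiffOp s)^[m+1] (G ∘ fun t : ℝ => Fin.cons t μ) x = 0 := by
          intro s x
          rw [hcomp s (m+1)]
          have : ((fwdDiffOp (Fin.cons s (0 : Fin n → ℝ)))^[m+1] G) =
              (List.replicate (m+1) (Fin.cons s (0 : Fin n → ℝ))).foldr fwdDiffOp G :=
            iter_eq_foldr_replicate _ _ _
          simp only [Function.comp_apply, this]
          exact hd _ List.length_replicate _
        have := frechet1 m (G ∘ fun t : ℝ => Fin.cons t μ) (hc.comp (hconsc μ)) hdiff1 t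
        simp only [Function.comp_apply] at this
        rw [this]
        apply Finset.sum_congr rfl
        intro k _
        rw [hcomp 1 k, hE0]
        rfl
      -- the coefficient functions
      have hGk : ∀ k : ℕ, ∀ μ : Fin n → ℝ,
          ((fwdDiffOp (E 0))^[k] G) (Fin.cons (0:ℝ) μ) =
          ∑ β ∈ Fintype.piFinset (fun _ : Fin n => Finset.range (m+1)),
            iterFwdDiff E (Fin.cons k β) G 0 * ∏ i, genBinom (μ i) (β i) := by
        intro k μ
        set Gk : (Fin n → ℝ) → ℝ :=
          ((fwdDiffOp (E 0))^[k] G) ∘ (fun μ : Fin n → ℝ => Fin.cons (0:ℝ) μ) with hGkdef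
        have hcons0_add : ∀ (u x : Fin n → ℝ),
            (Fin.cons (0:ℝ) (x + u) : Fin (n+1) → ℝ)
              = Fin.cons (0:ℝ) x + Fin.cons (0:ℝ) u := by
          intro u x
          rw [← hcons_add, add_zero]
        have hc0 : Continuous (fun μ : Fin n → ℝ => (Fin.cons (0:ℝ) μ : Fin (n+1) → ℝ)) := by
          apply continuous_pi
          intro j
          refine Fin.cases ?_ ?_ j
          · simpa using continuous_const
          · intro i
            simpa using continuous_apply i
        have hGkc : Continuous Gk :=
          (continuous_fwdDiffOp_iter _ k hc).comp hc0
        have hGkd : ∀ L : List (Fin n → ℝ), L.length = m + 1 → ∀ x,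
            (L.foldr fwdDiffOp Gk) x = 0 := by
          intro L hL x
          rw [hGkdef, foldr_comp (fun μ : Fin n → ℝ => (Fin.cons (0:ℝ) μ : Fin (n+1) → ℝ))
            (fun u => Fin.cons (0:ℝ) u) (fun u x => hcons0_add u x) L]
          simp only [Function.comp_apply]
          rw [foldr_fwdDiffOp_iter_comm]
          apply fwdDiffOp_iter_zero_fn
          apply hd
          rw [List.length_map]
          exact hL
        have hIH := ih Gk hGkc hGkd μ
        rw [hGkdef] at hIH
        simp only [Function.comp_apply] at hIH
        rw [hIH]
        apply Finset.sum_congr rfl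
        intro β _
        congr 1
        -- identify the iterated differences
        have hlift := foldr_iter_comp (fun μ : Fin n → ℝ => (Fin.cons (0:ℝ) μ : Fin (n+1) → ℝ))
          (List.finRange n) β (fun i => Pi.single i 1) (fun i => E i.succ)
          (fun i x => by
            show (Fin.cons (0:ℝ) (x + Pi.single i 1) : Fin (n+1) → ℝ)
              = Fin.cons (0:ℝ) x + E i.succ
            rw [hcons0_add, hEs]) ((fwdDiffOp (E 0))^[k] G)
        have h1 : iterFwdDiff (fun i : Fin n => Pi.single i 1) β
            (((fwdDiffOp (E 0))^[k] G) ∘ (fun μ : Fin n → ℝ => Fin.cons (0:ℝ) μ)) 0 =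
            ((List.finRange n).foldr (fun i g => (fwdDiffOp (E i.succ))^[β i] g)
              ((fwdDiffOp (E 0))^[k] G)) (Fin.cons (0:ℝ) (0 : Fin n → ℝ)) := by
          rw [iterFwdDiff, hlift]
          rfl
        rw [h1, hzero, foldr_iterops_iter_comm]
        -- now compute iterFwdDiff E (Fin.cons k β) G 0
        rw [iterFwdDiff, List.finRange_succ, List.foldr_cons, List.foldr_map]
        simp only [Fin.cons_zero, Fin.cons_succ]
      -- assemble
      calc G lam = G (Fin.cons (lam 0) (Fin.tail lam)) := by rw [Fin.cons_self_tail]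
        _ = ∑ k ∈ Finset.range (m+1), genBinom (lam 0) k *
              ((fwdDiffOp (E 0))^[k] G) (Fin.cons (0:ℝ) (Fin.tail lam)) := hslice _ _
        _ = ∑ k ∈ Finset.range (m+1), ∑ β ∈ Fintype.piFinset
              (fun _ : Fin n => Finset.range (m+1)),
              iterFwdDiff E (Fin.cons k β) G 0 *
                ∏ i : Fin (n+1), genBinom (lam i) ((Fin.cons k β : Fin (n+1) → ℕ) i) := by
            apply Finset.sum_congr rfl
            intro k _
            rw [hGk k (Fin.tail lam), Finset.mul_sum]
            apply Finset.sum_congr rfl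
            intro β _
            rw [Fin.prod_univ_succ]
            simp only [Fin.cons_zero, Fin.cons_succ]
            unfold Fin.tail
            ring
        _ = ∑ α ∈ Fintype.piFinset (fun _ : Fin (n+1) => Finset.range (m+1)),
              iterFwdDiff E α G 0 * ∏ i, genBinom (lam i) (α i) :=
            (sum_piFinset_succ
              (fun α => iterFwdDiff E α G 0 * ∏ i, genBinom (lam i) (α i))).symm

/-- Let `f : V → ℝ` be a polynomial of degree `≤ m` on a real vector
space `V` (all `(m+1)`-fold forward differences vanish and the restriction of `f` to every
finite-dimensional subspace is continuous), and let `v₁, …, v_n ∈ V` be linearly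
independent.  Then `D^α f(0) = 0` whenever `α₁ + ⋯ + α_n > m`, and for all real
`λ₁, …, λ_n`, `f(λ₁v₁ + ⋯ + λ_n v_n) = Σ_α D^α f(0) · C(λ₁,α₁) ⋯ C(λ_n,α_n)`, the sum
being over a (finite) set of multi-indices containing all `α` with `α₁ + ⋯ + α_n ≤ m`
(all other terms vanish). -/
theorem stmt11 {V : Type*} [AddCommGroup V] [Module ℝ V] (m : ℕ) (f : V → ℝ)
    (hdiff : ∀ v : Fin (m + 1) → V, ∀ x : V, ((List.ofFn v).foldr fwdDiffOp f) x = 0)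
    (hcont : ∀ (k : ℕ) (ι : (Fin k → ℝ) →ₗ[ℝ] V), Function.Injective ι →
      Continuous (f ∘ ι))
    (n : ℕ) (v : Fin n → V) (hv : LinearIndependent ℝ v) :
    (∀ α : Fin n → ℕ, m < ∑ i, α i → iterFwdDiff v α f 0 = 0) ∧
    (∀ lam : Fin n → ℝ,
      f (∑ i, lam i • v i) =
        ∑ α ∈ Fintype.piFinset (fun _ : Fin n => Finset.range (m + 1)),
          iterFwdDiff v α f 0 * ∏ i, genBinom (lam i) (α i)) := by
  refine ⟨fun α hα => iterFwdDiff_vanish hdiff v α hα 0, fun lam => ?_⟩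
  -- the linear map ℝⁿ → V
  set ι : (Fin n → ℝ) →ₗ[ℝ] V :=
    { toFun := fun c => ∑ i, c i • v i
      map_add' := by
        intro a b
        simp [add_smul, Finset.sum_add_distrib]
      map_smul' := by
        intro r a
        simp [smul_smul, Finset.smul_sum] } with hι
  have hιapp : ∀ c : Fin n → ℝ, ι c = ∑ i, c i • v i := fun _ => rfl
  have hinj : Function.Injective ι := by
    intro a b hab
    have h0 : ι (a - b) = 0 := by rw [map_sub, hab, sub_self]
    have hz := Fintype.linearIndependent_iff.1 hv (a - b) (by rw [← hιapp]; exact h0)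
    funext i
    have := hz i
    simpa [sub_eq_zero] using this
  have hsingle : ∀ i : Fin n, ι (Pi.single i 1) = v i := by
    intro i
    rw [hιapp]
    rw [Finset.sum_eq_single i]
    · simp
    · intro j _ hj
      simp [Pi.single_apply, hj.symm]
    · intro hi
      exact absurd (Finset.mem_univ i) hi
  set e : (Fin n → ℝ) → V := fun c => ι c with he
  set G : (Fin n → ℝ) → ℝ := f ∘ e with hG
  have hGc : Continuous G := hcont n ι hinj
  have hGd : ∀ L : List (Fin n → ℝ), L.length = m + 1 → ∀ x, (L.foldr fwdDiffOp G) x = 0 := by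
    intro L hL x
    rw [hG, foldr_comp e e (fun u x => by rw [he]; simp) L f]
    exact hdiff_list hdiff (L.map e) (by rw [List.length_map]; exact hL) _
  have hmain := mainR m n G hGc hGd lam
  have htrans : ∀ α : Fin n → ℕ,
      iterFwdDiff (fun i : Fin n => Pi.single i 1) α G 0 = iterFwdDiff v α f 0 := by
    intro α
    have := foldr_iter_comp e (List.finRange n) α (fun i => Pi.single i 1) v
      (fun i x => by rw [he]; simp [hsingle i]) f
    rw [hG, iterFwdDiff, this]
    have he0 : e 0 = 0 := by rw [he]; simp
    show ((List.finRange n).foldr (fun i g => (fwdDiffOp (v i))^[α i] g) f) (e 0)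
      = iterFwdDiff v α f 0
    rw [he0]
    rfl
  have harg : f (∑ i, lam i • v i) = G lam := by
    rw [hG, he, Function.comp_apply, hιapp]
  rw [harg, hmain]
  apply Finset.sum_congr rfl
  intro α _
  rw [htrans]
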